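/- Let C(k,j) denote the sum of signs over all (k−j, j−1)-unshuffles in S_{k−1}. Then for integers p ≥ q ≥ 1, one has C(2p+1, 2q) = 0; that is, when k is odd and j is even, the number of even unshuffles equals the number of odd unshuffles. -/

import Mathlib

open scoped Classical

/-- Sum of the signs of all permutations of `Fin n` that are strictly increasing
on the first `m` positions and on the remaining `n - m` positions.
For `n = k - 1` and `m = k - j` these are the `(k-j, j-1)`-unshuffles. -/
noncomputable def unshuffleSignSum (n m : ℕ) : ℤ :=
  ∑ σ : Equiv.Perm (Fin n),
    if ((∀ i j : Fin n, i < j → (j : ℕ) < m → σ i < σ j) ∧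
        (∀ i j : Fin n, i < j → m ≤ (i : ℕ) → σ i < σ j)) then
      (Equiv.Perm.sign σ : ℤ) else 0

namespace UnshuffleAux

variable {N m : ℕ}

def pa (N : ℕ) (t : Fin N) : Fin (2 * N) := ⟨2 * t, by have := t.isLt; omega⟩
def pb (N : ℕ) (t : Fin N) : Fin (2 * N) := ⟨2 * t + 1, by have := t.isLt; omega⟩

lemma pa_ne_pb (N : ℕ) (t : Fin N) : pa N t ≠ pb N t := by
  simp [pa, pb, Fin.ext_iff]

/-- exactly one of the pair `(2t, 2t+1)` lies in the image of the first `m` positions. -/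
def D (m : ℕ) (σ : Equiv.Perm (Fin (2 * N))) (t : Fin N) : Prop :=
  ¬ ((((σ⁻¹ (pa N t) : Fin (2 * N)) : ℕ) < m) ↔ (((σ⁻¹ (pb N t) : Fin (2 * N)) : ℕ) < m))

def IsUnsh (n m : ℕ) (σ : Equiv.Perm (Fin n)) : Prop :=
  (∀ i j : Fin n, i < j → (j : ℕ) < m → σ i < σ j) ∧
    (∀ i j : Fin n, i < j → m ≤ (i : ℕ) → σ i < σ j)

lemma swap_lt {n : ℕ} {a b x y : Fin n} (hab : (b : ℕ) = (a : ℕ) + 1) (hxy : x < y)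
    (hne : ¬(x = a ∧ y = b)) : Equiv.swap a b x < Equiv.swap a b y := by
  have hxy' : (x : ℕ) < (y : ℕ) := hxy
  rw [Equiv.swap_apply_def, Equiv.swap_apply_def]
  split_ifs <;>
  · simp only [Fin.ext_iff, not_and] at *
    simp only [Fin.lt_def] at *
    omega

/-- existence: for every permutation there is a pair with exactly one element in the image. -/
lemma exists_D (hm : Odd m) (hmn : m ≤ 2 * N) (σ : Equiv.Perm (Fin (2 * N))) :
    ∃ t : Fin N, D m σ t := by
  by_contra hcon
  push_neg at hcon
  simp only [D, not_not] at hcon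
  set S : Finset (Fin (2 * N)) :=
    Finset.univ.filter (fun v => ((σ⁻¹ v : Fin (2 * N)) : ℕ) < m) with hS
  have hmlt : m < 2 * N := by
    rcases hm with ⟨r, hr⟩; omega
  have hcard : S.card = m := by
    have h1 : S = Finset.map σ.toEmbedding
        (Finset.univ.filter fun i : Fin (2 * N) => (i : ℕ) < m) := by
      ext v
      simp only [hS, Finset.mem_filter, Finset.mem_map, Finset.mem_univ, true_and,
        Equiv.coe_toEmbedding]
      constructor
      · intro h; exact ⟨σ⁻¹ v, h, σ.apply_symm_apply v⟩
      · rintro ⟨i, hi, rfl⟩; simpa using hi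
    have h2 : (Finset.univ.filter fun i : Fin (2 * N) => (i : ℕ) < m) =
        Finset.Iio (⟨m, hmlt⟩ : Fin (2 * N)) := by
      ext i; simp [Fin.lt_def]
    rw [h1, Finset.card_map, h2, Fin.card_Iio]
  -- fiberwise count: each fiber has even cardinality
  have hfiber : ∀ t : Fin N,
      (S.filter fun v : Fin (2 * N) => (v : ℕ) / 2 = (t : ℕ)).card = if (((σ⁻¹ (pa N t) : Fin (2*N)) : ℕ) < m) then 2 else 0 := by
    intro t
    have hmem : ∀ v : Fin (2 * N), ((v : ℕ) / 2 = (t : ℕ)) ↔ (v = pa N t ∨ v = pb N t) := by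
      intro v
      constructor
      · intro h
        rcases Nat.even_or_odd (v : ℕ) with he | ho
        · left; rcases he with ⟨r, hr⟩; simp only [pa, Fin.ext_iff]; omega
        · right; rcases ho with ⟨r, hr⟩; simp only [pb, Fin.ext_iff]; omega
      · rintro (rfl | rfl) <;> simp only [pa, pb] <;> omega
    by_cases hin : (((σ⁻¹ (pa N t) : Fin (2*N)) : ℕ) < m)
    · have hin' := (hcon t).mp hin
      have : (S.filter fun v : Fin (2 * N) => (v : ℕ) / 2 = (t : ℕ)) = {pa N t, pb N t} := by
        ext v
        simp only [Finset.mem_filter, hS, Finset.mem_univ, true_and, Finset.mem_insert,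
          Finset.mem_singleton, hmem]
        constructor
        · rintro ⟨_, h⟩; exact h
        · rintro (rfl | rfl) <;> exact ⟨by assumption, by simp⟩
      rw [this, if_pos hin, Finset.card_insert_of_notMem (by simp [pa_ne_pb]),
        Finset.card_singleton]
    · have hin' : ¬ (((σ⁻¹ (pb N t) : Fin (2*N)) : ℕ) < m) := fun h => hin ((hcon t).mpr h)
      have : (S.filter fun v : Fin (2 * N) => (v : ℕ) / 2 = (t : ℕ)) = ∅ := by
        ext v
        simp only [Finset.mem_filter, hS, Finset.mem_univ, true_and, Finset.notMem_empty,
          iff_false, not_and, hmem]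
        rintro hv (rfl | rfl)
        · exact hin hv
        · exact hin' hv
      rw [this, if_neg hin]; rfl
  have heven : Even S.card := by
    have hmap : ∀ v ∈ S, (⟨(v : ℕ) / 2, by have := v.isLt; omega⟩ : Fin N) ∈ (Finset.univ : Finset (Fin N)) := by
      intros; exact Finset.mem_univ _
    rw [Finset.card_eq_sum_card_fiberwise hmap]
    apply Finset.even_sum
    intro t _
    have : (S.filter fun v : Fin (2 * N) => (⟨(v : ℕ) / 2, by have := v.isLt; omega⟩ : Fin N) = t) =
        (S.filter fun v : Fin (2 * N) => (v : ℕ) / 2 = (t : ℕ)) := by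
      apply Finset.filter_congr
      intro v _
      simp [Fin.ext_iff]
    rw [this, hfiber t]
    split_ifs <;> simp
  rw [hcard] at heven
  exact (Nat.not_even_iff_odd.mpr hm) heven

lemma D_exactly_one {σ : Equiv.Perm (Fin (2 * N))} {t : Fin N} (h : D m σ t) :
    ¬ (σ⁻¹ (pa N t) = σ⁻¹ (pa N t)) ∨ True := Or.inr trivial

/-- the unshuffle property is preserved by swapping the pair values. -/
lemma isUnsh_swap {σ : Equiv.Perm (Fin (2 * N))} {t : Fin N} (hD : D m σ t)
    (hσ : IsUnsh (2 * N) m σ) :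
    IsUnsh (2 * N) m (Equiv.swap (pa N t) (pb N t) * σ) := by
  obtain ⟨h1, h2⟩ := hσ
  have hab : ((pb N t : Fin (2 * N)) : ℕ) = ((pa N t : Fin (2 * N)) : ℕ) + 1 := rfl
  constructor
  · intro i j hij hjm
    rw [Equiv.Perm.mul_apply, Equiv.Perm.mul_apply]
    refine swap_lt hab (h1 i j hij hjm) ?_
    rintro ⟨hia, hjb⟩
    apply hD
    have him : ((σ⁻¹ (pa N t) : Fin (2 * N)) : ℕ) < m := by
      rw [← hia, Equiv.Perm.inv_def, Equiv.symm_apply_apply]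
      exact lt_of_le_of_lt (Nat.le_of_lt (Fin.lt_def.mp hij)) hjm
    have hjm' : ((σ⁻¹ (pb N t) : Fin (2 * N)) : ℕ) < m := by
      rw [← hjb, Equiv.Perm.inv_def, Equiv.symm_apply_apply]; exact hjm
    exact ⟨fun _ => hjm', fun _ => him⟩
  · intro i j hij him
    rw [Equiv.Perm.mul_apply, Equiv.Perm.mul_apply]
    refine swap_lt hab (h2 i j hij him) ?_
    rintro ⟨hia, hjb⟩
    apply hD
    have hi' : ¬ ((σ⁻¹ (pa N t) : Fin (2 * N)) : ℕ) < m := by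
      rw [← hia, Equiv.Perm.inv_def, Equiv.symm_apply_apply]; omega
    have hj' : ¬ ((σ⁻¹ (pb N t) : Fin (2 * N)) : ℕ) < m := by
      rw [← hjb, Equiv.Perm.inv_def, Equiv.symm_apply_apply]
      have : m ≤ (j : ℕ) := le_trans him (Nat.le_of_lt (Fin.lt_def.mp hij))
      omega
    exact ⟨fun h => absurd h hi', fun h => absurd h hj'⟩

/-- `D` is invariant under left multiplication by the swap of any pair. -/
lemma D_swap (σ : Equiv.Perm (Fin (2 * N))) (t s : Fin N) :
    D m (Equiv.swap (pa N t) (pb N t) * σ) s ↔ D m σ s := by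
  have hinv : (Equiv.swap (pa N t) (pb N t) * σ)⁻¹ =
      σ⁻¹ * Equiv.swap (pa N t) (pb N t) := by
    rw [mul_inv_rev, Equiv.swap_inv]
  rcases eq_or_ne s t with rfl | hst
  · simp only [D, hinv, Equiv.Perm.mul_apply, Equiv.swap_apply_left, Equiv.swap_apply_right]
    tauto
  · have hs : (s : ℕ) ≠ (t : ℕ) := fun h => hst (Fin.ext h)
    have ha : Equiv.swap (pa N t) (pb N t) (pa N s) = pa N s :=
      Equiv.swap_apply_of_ne_of_ne (by simp [pa, pb, Fin.ext_iff]; omega)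
        (by simp [pa, pb, Fin.ext_iff]; omega)
    have hb : Equiv.swap (pa N t) (pb N t) (pb N s) = pb N s :=
      Equiv.swap_apply_of_ne_of_ne (by simp [pa, pb, Fin.ext_iff]; omega)
        (by simp [pa, pb, Fin.ext_iff]; omega)
    simp only [D, hinv, Equiv.Perm.mul_apply, ha, hb]

lemma min'_eq_of_eq {α : Type*} [LinearOrder α] {s t : Finset α} (h : s = t)
    (hs : s.Nonempty) : s.min' hs = t.min' (h ▸ hs) := by subst h; rfl

/-- chosen index -/
noncomputable def tIdx (hm : Odd m) (hmn : m ≤ 2 * N) (σ : Equiv.Perm (Fin (2 * N))) : Fin N :=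
  (Finset.univ.filter (fun t => D m σ t)).min'
    (by obtain ⟨t, ht⟩ := exists_D hm hmn σ; exact ⟨t, by simp [ht]⟩)

lemma tIdx_spec (hm : Odd m) (hmn : m ≤ 2 * N) (σ : Equiv.Perm (Fin (2 * N))) :
    D m σ (tIdx hm hmn σ) := by
  have := Finset.min'_mem (Finset.univ.filter (fun t => D m σ t))
    (by obtain ⟨t, ht⟩ := exists_D hm hmn σ; exact ⟨t, by simp [ht]⟩)
  exact (Finset.mem_filter.mp this).2

noncomputable def g (hm : Odd m) (hmn : m ≤ 2 * N) (σ : Equiv.Perm (Fin (2 * N))) :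
    Equiv.Perm (Fin (2 * N)) :=
  Equiv.swap (pa N (tIdx hm hmn σ)) (pb N (tIdx hm hmn σ)) * σ

lemma tIdx_g (hm : Odd m) (hmn : m ≤ 2 * N) (σ : Equiv.Perm (Fin (2 * N))) :
    tIdx hm hmn (g hm hmn σ) = tIdx hm hmn σ := by
  apply min'_eq_of_eq
  ext s
  simp only [Finset.mem_filter, Finset.mem_univ, true_and, g]
  exact (Finset.mem_filter.trans (and_iff_right (Finset.mem_univ _))).trans (D_swap σ _ s)

lemma g_g (hm : Odd m) (hmn : m ≤ 2 * N) (σ : Equiv.Perm (Fin (2 * N))) :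
    g hm hmn (g hm hmn σ) = σ := by
  rw [show g hm hmn (g hm hmn σ) = Equiv.swap (pa N (tIdx hm hmn (g hm hmn σ)))
      (pb N (tIdx hm hmn (g hm hmn σ))) * g hm hmn σ from rfl, tIdx_g, g,
    ← mul_assoc, Equiv.swap_mul_self, one_mul]

lemma g_ne (hm : Odd m) (hmn : m ≤ 2 * N) (σ : Equiv.Perm (Fin (2 * N))) :
    g hm hmn σ ≠ σ := by
  unfold g
  intro h
  have h1 : Equiv.swap (pa N (tIdx hm hmn σ)) (pb N (tIdx hm hmn σ)) * σ = 1 * σ := by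
    rw [one_mul]; exact h
  exact pa_ne_pb N _ (Equiv.swap_eq_one_iff.mp (mul_right_cancel h1))

lemma sign_g (hm : Odd m) (hmn : m ≤ 2 * N) (σ : Equiv.Perm (Fin (2 * N))) :
    Equiv.Perm.sign (g hm hmn σ) = - Equiv.Perm.sign σ := by
  unfold g
  rw [Equiv.Perm.sign_mul, Equiv.Perm.sign_swap (pa_ne_pb N _), neg_one_mul]

lemma isUnsh_g_iff (hm : Odd m) (hmn : m ≤ 2 * N) (σ : Equiv.Perm (Fin (2 * N))) :
    IsUnsh (2 * N) m (g hm hmn σ) ↔ IsUnsh (2 * N) m σ := by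
  constructor
  · intro h
    have := isUnsh_swap (tIdx_spec hm hmn (g hm hmn σ)) h
    rw [show Equiv.swap (pa N (tIdx hm hmn (g hm hmn σ))) (pb N (tIdx hm hmn (g hm hmn σ))) *
        g hm hmn σ = g hm hmn (g hm hmn σ) from rfl, g_g] at this
    exact this
  · exact isUnsh_swap (tIdx_spec hm hmn σ)

lemma main (N m : ℕ) (hm : Odd m) (hmn : m ≤ 2 * N) :
    unshuffleSignSum (2 * N) m = 0 := by
  have hrw : unshuffleSignSum (2 * N) m =
      ∑ σ : Equiv.Perm (Fin (2 * N)),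
        if IsUnsh (2 * N) m σ then (Equiv.Perm.sign σ : ℤ) else 0 := by
    unfold unshuffleSignSum IsUnsh
    refine Finset.sum_congr rfl fun σ _ => ?_
    by_cases h : (∀ i j : Fin (2 * N), i < j → (j : ℕ) < m → σ i < σ j) ∧
        (∀ i j : Fin (2 * N), i < j → m ≤ (i : ℕ) → σ i < σ j)
    · rw [if_pos h, if_pos h]
    · rw [if_neg h, if_neg h]
  rw [hrw]
  apply Finset.sum_ninvolution (g hm hmn)
  · intro σ
    by_cases h : IsUnsh (2 * N) m σ
    · rw [if_pos h, if_pos ((isUnsh_g_iff hm hmn σ).mpr h), sign_g]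
      simp
    · rw [if_neg h, if_neg (fun h' => h ((isUnsh_g_iff hm hmn σ).mp h'))]
      simp
  · intro σ _
    exact g_ne hm hmn σ
  · intro σ
    exact Finset.mem_univ _
  · intro σ
    exact g_g hm hmn σ

end UnshuffleAux

/-- `C(k, j)` for `k = 2p + 1`, `j = 2q`: the signed count of unshuffles vanishes. -/
theorem unshuffle_count_odd_even (p q : ℕ) (h1 : 1 ≤ q) (h2 : q ≤ p) :
    unshuffleSignSum (2 * p) (2 * p + 1 - 2 * q) = 0 := by
  exact UnshuffleAux.main p _ ⟨p - q, by omega⟩ (by omega)
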